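/- Let α > 0 and let β be a real number with |β| < (1/4)·α^{3/2}. Then the cubic equation x·(α − x²) − β = 0 has three real solutions x₁, x₂, x₃ satisfying |x₁ − √α| ≤ 2|β|/α, |x₂ + √α| ≤ 2|β|/α, and |x₃| ≤ 2|β|/α. -/

import Mathlib

set_option maxHeartbeats 1000000

private lemma ivt_root_up (f : ℝ → ℝ) (hf : Continuous f) {a b : ℝ} (hab : a ≤ b)
    (ha : f a ≤ 0) (hb : 0 ≤ f b) : ∃ x ∈ Set.Icc a b, f x = 0 := by
  obtain ⟨x, hx, hfx⟩ := intermediate_value_Icc hab hf.continuousOn ⟨ha, hb⟩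
  exact ⟨x, hx, hfx⟩

private lemma ivt_root_down (f : ℝ → ℝ) (hf : Continuous f) {a b : ℝ} (hab : a ≤ b)
    (ha : 0 ≤ f a) (hb : f b ≤ 0) : ∃ x ∈ Set.Icc a b, f x = 0 := by
  obtain ⟨x, hx, hfx⟩ := intermediate_value_Icc' hab hf.continuousOn ⟨hb, ha⟩
  exact ⟨x, hx, hfx⟩

/-- **Root estimation for the cubic gradient equation.**
Let `α > 0` and `|β| < (1/4)·α^(3/2)`. Then the cubic equation
`x·(α − x²) − β = 0` has three (distinct) real solutions `x₁, x₂, x₃` with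
`|x₁ − √α| ≤ 2|β|/α`, `|x₂ + √α| ≤ 2|β|/α`, `|x₃| ≤ 2|β|/α`. -/
theorem cubic_root_estimation (α β : ℝ) (hα : 0 < α)
    (hβ : |β| < (1 / 4) * α ^ ((3 : ℝ) / 2)) :
    ∃ x₁ x₂ x₃ : ℝ,
      x₁ * (α - x₁ ^ 2) - β = 0 ∧
      x₂ * (α - x₂ ^ 2) - β = 0 ∧
      x₃ * (α - x₃ ^ 2) - β = 0 ∧
      x₁ ≠ x₂ ∧ x₁ ≠ x₃ ∧ x₂ ≠ x₃ ∧
      |x₁ - Real.sqrt α| ≤ 2 * |β| / α ∧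
      |x₂ + Real.sqrt α| ≤ 2 * |β| / α ∧
      |x₃| ≤ 2 * |β| / α := by
  set s := Real.sqrt α with hs_def
  have hs : 0 < s := Real.sqrt_pos.mpr hα
  have hs2 : s ^ 2 = α := Real.sq_sqrt hα.le
  have hpow : α ^ ((3 : ℝ) / 2) = s ^ 3 := by
    rw [show ((3 : ℝ) / 2) = (1 / 2) * 3 by norm_num, Real.rpow_mul hα.le,
      ← Real.sqrt_eq_rpow, show (3 : ℝ) = ((3 : ℕ) : ℝ) by norm_num, Real.rpow_natCast]
  rw [hpow] at hβ
  by_cases hb : β = 0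
  · refine ⟨s, -s, 0, ?_, ?_, ?_, ?_, ?_, ?_, ?_, ?_, ?_⟩
    · rw [hb, hs2]; ring
    · rw [hb, show (-s)^2 = s^2 by ring, hs2]; ring
    · rw [hb]; ring
    · intro h; nlinarith
    · intro h; nlinarith
    · intro h; nlinarith
    · simp; positivity
    · simp; positivity
    · simp; positivity
  · set δ := 2 * |β| / α with hδ_def
    have habs : 0 < |β| := abs_pos.mpr hb
    have hδα : δ * α = 2 * |β| := by rw [hδ_def]; field_simp
    have hδs2 : δ * s ^ 2 = 2 * |β| := by rw [hs2]; exact hδα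
    have hδ0 : 0 < δ := by positivity
    have hδs : δ < s / 2 := by nlinarith [hs2, hs]
    have key1 : 0 < s * δ * (s / 2 - δ) :=
      mul_pos (mul_pos hs hδ0) (by linarith)
    have key2 : 0 < δ * ((s / 2 - δ) * (s / 2 + δ)) :=
      mul_pos hδ0 (mul_pos (by linarith) (by linarith))
    have key3 : 0 < δ * δ * δ := by positivity
    have key4 : 0 < s * δ * δ := by positivity
    have hcont : Continuous (fun x : ℝ => x * (α - x ^ 2) - β) := by continuity
    have hb1 : β ≤ |β| := le_abs_self β
    have hb2 : -β ≤ |β| := neg_le_abs β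
    obtain ⟨x₁, hx₁, hfx₁⟩ := ivt_root_down (fun x : ℝ => x * (α - x ^ 2) - β) hcont
      (show s - δ ≤ s + δ by linarith)
      (by simp only [← hs2]; nlinarith [hδs2, hb1, hb2, key1, key2, key3, key4, habs])
      (by simp only [← hs2]; nlinarith [hδs2, hb1, hb2, key1, key2, key3, key4, habs])
    obtain ⟨x₂, hx₂, hfx₂⟩ := ivt_root_down (fun x : ℝ => x * (α - x ^ 2) - β) hcont
      (show -s - δ ≤ -s + δ by linarith)
      (by simp only [← hs2]; nlinarith [hδs2, hb1, hb2, key1, key2, key3, key4, habs])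
      (by simp only [← hs2]; nlinarith [hδs2, hb1, hb2, key1, key2, key3, key4, habs])
    obtain ⟨x₃, hx₃, hfx₃⟩ := ivt_root_up (fun x : ℝ => x * (α - x ^ 2) - β) hcont
      (show -δ ≤ δ by linarith)
      (by simp only [← hs2]; nlinarith [hδs2, hb1, hb2, key1, key2, key3, key4, habs])
      (by simp only [← hs2]; nlinarith [hδs2, hb1, hb2, key1, key2, key3, key4, habs])
    obtain ⟨h₁l, h₁r⟩ := hx₁
    obtain ⟨h₂l, h₂r⟩ := hx₂
    obtain ⟨h₃l, h₃r⟩ := hx₃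
    refine ⟨x₁, x₂, x₃, hfx₁, hfx₂, hfx₃, ?_, ?_, ?_, ?_, ?_, ?_⟩
    · intro h; rw [h] at h₁l; linarith
    · intro h; rw [h] at h₁l; linarith
    · intro h; rw [h] at h₂r; linarith
    · exact abs_le.mpr ⟨by linarith, by linarith⟩
    · exact abs_le.mpr ⟨by linarith, by linarith⟩
    · exact abs_le.mpr ⟨by linarith, by linarith⟩
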